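/- Let G be an unmixed graph as in the setup. If no 4-cycle C_{ij} (with edges x_iy_i, y_ix_j, x_jy_j, y_jx_i) is contained in G for any i < j, then for every r ≥ 2 and every r-subset {i_1,...,i_r} of {1,...,n}, the 2r-cycle C_{i_1...i_r} with edges {x_{i_1}y_{i_1}, y_{i_1}x_{i_2}, x_{i_2}y_{i_2}, ..., x_{i_r}y_{i_r}, y_{i_r}x_{i_1}} is not contained in G. -/

import Mathlib

open SimpleGraph

/-- `C` is a vertex cover of `G`. -/
def IsVC {V : Type*} (G : SimpleGraph V) (C : Set V) : Prop :=
  ∀ ⦃u v : V⦄, G.Adj u v → u ∈ C ∨ v ∈ C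

/-- `C` is a minimal (inclusion-wise) vertex cover of `G`. -/
def IsMinVC {V : Type*} (G : SimpleGraph V) (C : Set V) : Prop :=
  IsVC G C ∧ ∀ C' : Set V, C' ⊆ C → IsVC G C' → C' = C

/-- `A` is an independent set of `G`. -/
def IsIndep {V : Type*} (G : SimpleGraph V) (A : Set V) : Prop :=
  ∀ ⦃u v : V⦄, u ∈ A → v ∈ A → ¬ G.Adj u v

/-- `A` is a maximal independent set of `G`. -/
def IsMaxIndep {V : Type*} (G : SimpleGraph V) (A : Set V) : Prop :=
  IsIndep G A ∧ ∀ A' : Set V, A ⊆ A' → IsIndep G A' → A' = A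

/-- `G` is unmixed: all minimal vertex covers have the same cardinality. -/
def Unmixed {V : Type*} (G : SimpleGraph V) : Prop :=
  ∀ C₁ C₂ : Set V, IsMinVC G C₁ → IsMinVC G C₂ → C₁.ncard = C₂.ncard

/-- Vertex type with the two classes `X = {x_1,…,x_n}` (left) and `Y = {y_1,…,y_n}` (right). -/
abbrev VT (n : ℕ) := Fin n ⊕ Fin n

/-- The vertex `x_i`. -/
def xv {n : ℕ} (i : Fin n) : VT n := Sum.inl i

/-- The vertex `y_i`. -/
def yv {n : ℕ} (i : Fin n) : VT n := Sum.inr i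

/-- The 4-cycle `C_{ij}` (edges `x_iy_i, y_ix_j, x_jy_j, y_jx_i`) is contained in `G`. -/
def HasC2 {n : ℕ} (G : SimpleGraph (VT n)) (i j : Fin n) : Prop :=
  G.Adj (xv i) (yv i) ∧ G.Adj (yv i) (xv j) ∧ G.Adj (xv j) (yv j) ∧ G.Adj (yv j) (xv i)

/-- The `2r`-cycle `C_{i_1…i_r}` given by `f : Fin r → Fin n` is contained in `G`:
edges `x_{f s} y_{f s}` and `y_{f s} x_{f (s+1)}` (cyclically). -/
def IsCycleIn {n r : ℕ} (G : SimpleGraph (VT n)) (f : Fin r → Fin n) : Prop :=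
  ∀ s : Fin r, G.Adj (xv (f s)) (yv (f s)) ∧ G.Adj (yv (f s)) (xv (f (finRotate r s)))

/-- If no 4-cycle `C_{ij}` is contained in the unmixed graph `G` (setup (*)), then for all
`r ≥ 2` no `2r`-cycle `C_{i_1…i_r}` is contained in `G`. -/
-- auxiliary: extend an independent set to a maximal one
lemma exists_max_indep {V : Type*} [Fintype V] (G : SimpleGraph V) (S : Set V)
    (hS : IsIndep G S) : ∃ A : Set V, S ⊆ A ∧ IsMaxIndep G A := by
  obtain ⟨A, hA, hmax⟩ := Set.Finite.exists_maximalFor (id : Set V → Set V)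
    {B : Set V | S ⊆ B ∧ IsIndep G B} (Set.toFinite _) ⟨S, subset_rfl, hS⟩
  refine ⟨A, hA.1, hA.2, fun A' hAA' hA' => ?_⟩
  exact le_antisymm (hmax ⟨hA.1.trans hAA', hA'⟩ hAA') hAA'

-- complement of maximal independent set is a minimal vertex cover
lemma compl_maxIndep_minVC {V : Type*} (G : SimpleGraph V) (A : Set V)
    (hA : IsMaxIndep G A) : IsMinVC G Aᶜ := by
  constructor
  · intro u v huv
    by_contra h
    push_neg at h
    simp only [Set.mem_compl_iff, not_not] at h
    exact hA.1 h.1 h.2 huv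
  · intro C' hC' hvc
    have hA' : IsIndep G C'ᶜ := by
      intro u v hu hv huv
      rcases hvc huv with h | h
      · exact hu h
      · exact hv h
    have : C'ᶜ = A := hA.2 C'ᶜ (fun x hx hx' => hC' hx' hx) hA'
    rw [← compl_compl C', this]

lemma ncard_range_xv {n : ℕ} : (Set.range (xv : Fin n → VT n)).ncard = n := by
  rw [← Set.image_univ, Set.ncard_image_of_injective _ (fun a b h => Sum.inl.inj h : Function.Injective (xv : Fin n → VT n)),
    Set.ncard_univ, Nat.card_eq_fintype_card, Fintype.card_fin]

-- key transitivity lemma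
lemma key {n : ℕ} (G : SimpleGraph (VT n))
    (hX : IsMinVC G (Set.range (xv : Fin n → VT n)))
    (hm : ∀ i : Fin n, G.Adj (xv i) (yv i))
    (hu : Unmixed G)
    {i j k : Fin n} (h1 : G.Adj (yv i) (xv j)) (h2 : G.Adj (yv j) (xv k)) :
    G.Adj (yv i) (xv k) := by
  by_contra hne
  have hS : IsIndep G ({yv i, xv k} : Set (VT n)) := by
    intro u v hu' hv' huv
    rcases hu' with rfl | rfl <;> rcases hv' with rfl | rfl
    · exact G.loopless.irrefl _ huv
    · exact hne huv
    · exact hne huv.symm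
    · exact G.loopless.irrefl _ huv
  obtain ⟨A, hSA, hA⟩ := exists_max_indep G _ hS
  have hyiA : yv i ∈ A := hSA (Set.mem_insert _ _)
  have hxkA : xv k ∈ A := hSA (Set.mem_insert_of_mem _ rfl)
  -- |A| = n
  have hcompl : Aᶜ.ncard = n := by
    rw [hu Aᶜ _ (compl_maxIndep_minVC G A hA) hX, ncard_range_xv]
  have htot : A.ncard + Aᶜ.ncard = 2 * n := by
    rw [Set.ncard_add_ncard_compl A, Nat.card_eq_fintype_card]
    simp [VT, two_mul]
  have hAn : A.ncard = n := by omega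
  -- but A misses both x_j and y_j, so |A| ≤ n - 1
  have hxj : xv j ∉ A := fun h => hA.1 hyiA h h1
  have hyj : yv j ∉ A := fun h => hA.1 h hxkA h2
  have hle : A.ncard ≤ ({j}ᶜ : Set (Fin n)).ncard := by
    apply Set.ncard_le_ncard_of_injOn (Sum.elim id id)
    · rintro (a | a) ha <;> simp only [Sum.elim_inl, Sum.elim_inr, id_eq,
        Set.mem_compl_iff, Set.mem_singleton_iff]
      · rintro rfl; exact hxj ha
      · rintro rfl; exact hyj ha
    · rintro (a | a) ha (b | b) hb hab
      · simp only [Sum.elim_inl, id_eq] at hab; subst hab; rfl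
      · simp only [Sum.elim_inl, Sum.elim_inr, id_eq] at hab; subst hab
        exact absurd (hm a) (hA.1 ha hb)
      · simp only [Sum.elim_inl, Sum.elim_inr, id_eq] at hab; subst hab
        exact absurd (hm a) (hA.1 hb ha)
      · simp only [Sum.elim_inr, id_eq] at hab; subst hab; rfl
  have hjc : ({j}ᶜ : Set (Fin n)).ncard = n - 1 := by
    have := Set.ncard_add_ncard_compl ({j} : Set (Fin n))
    rw [Set.ncard_singleton, Nat.card_eq_fintype_card, Fintype.card_fin] at this
    omega
  have hn : 1 ≤ n := j.pos
  omega

theorem no_C2_no_cycle {n : ℕ} (G : SimpleGraph (VT n))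
    (hni : ∀ v : VT n, ∃ u : VT n, G.Adj u v)
    (hX : IsMinVC G (Set.range (xv : Fin n → VT n)))
    (hY : IsMaxIndep G (Set.range (yv : Fin n → VT n)))
    (hm : ∀ i : Fin n, G.Adj (xv i) (yv i))
    (hht : ∀ C : Set (VT n), IsVC G C → n ≤ C.ncard)
    (hu : Unmixed G)
    (h2 : ∀ i j : Fin n, i < j → ¬ HasC2 G i j) :
    ∀ r : ℕ, 2 ≤ r → ∀ f : Fin r → Fin n, Function.Injective f → ¬ IsCycleIn G f := by
  intro r hr
  induction r, hr using Nat.le_induction with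
  | base =>
    intro f hf hc
    have h0 := hc 0
    have h1 := hc 1
    have e0 : finRotate 2 (0 : Fin 2) = 1 := by decide
    have e1 : finRotate 2 (1 : Fin 2) = 0 := by decide
    rw [e0] at h0; rw [e1] at h1
    rcases lt_trichotomy (f 0) (f 1) with h | h | h
    · exact h2 _ _ h ⟨h0.1, h0.2, h1.1, h1.2⟩
    · exact absurd (hf h) (by decide)
    · exact h2 _ _ h ⟨h1.1, h1.2, h0.1, h0.2⟩
  | succ r hr IH =>
    intro f hf hc
    obtain ⟨m, rfl⟩ : ∃ m, r = m + 1 := ⟨r - 1, by omega⟩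
    set g : Fin (m + 1) → Fin n := f ∘ Fin.castSucc with hg
    apply IH g (hf.comp (Fin.castSucc_injective _))
    intro s
    constructor
    · exact (hc s.castSucc).1
    · by_cases hs : s = Fin.last m
      · subst hs
        -- need: Adj y_{f (castSucc (last m))} x_{g (finRotate (m+1) (last m))}
        have e1 : finRotate (m + 1 + 1) ((Fin.last m).castSucc) = Fin.last (m + 1) := by
          apply Fin.ext
          simp [finRotate_succ_apply, Fin.val_add_one, Fin.ext_iff] <;> omega
        have e2 : finRotate (m + 1 + 1) (Fin.last (m + 1)) = 0 := by
          apply Fin.ext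
          simp [finRotate_succ_apply, Fin.val_add_one]
        have e3 : g (finRotate (m + 1) (Fin.last m)) = f 0 := by
          have : finRotate (m + 1) (Fin.last m) = 0 := by
            rcases Nat.eq_zero_or_pos m with rfl | hm'
            · decide
            · obtain ⟨p, rfl⟩ : ∃ p, m = p + 1 := ⟨m - 1, by omega⟩
              apply Fin.ext
              simp [finRotate_succ_apply, Fin.val_add_one]
          rw [this, hg]
          simp [Fin.castSucc_zero]
        rw [e3]
        have hA := (hc (Fin.last m).castSucc).2
        rw [e1] at hA
        have hB := (hc (Fin.last (m + 1))).2
        rw [e2] at hB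
        exact key G hX hm hu hA hB
      · -- s.val + 1 ≤ m
        have hsv : s.val + 1 ≤ m := by
          have := s.isLt
          rcases Nat.lt_or_ge (s.val + 1) (m + 1) with h | h
          · omega
          · exact absurd (Fin.ext (by simp only [Fin.val_last]; omega)) hs
        have e4 : finRotate (m + 1 + 1) s.castSucc = (⟨s.val + 1, by omega⟩ : Fin (m+1)).castSucc := by
          apply Fin.ext
          simp [finRotate_succ_apply, Fin.val_add_one, Fin.ext_iff] <;> omega
        have e5 : finRotate (m + 1) s = ⟨s.val + 1, by omega⟩ := by
          apply Fin.ext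
          rw [finRotate_succ_apply, Fin.val_add_one, if_neg hs]
        have := (hc s.castSucc).2
        rw [e4] at this
        rw [e5]
        exact this
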